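/- Let (K, d) be a compact metric space and L > 0. Suppose C : K → ℝ satisfies C(x) ≥ 0 for every x ∈ K and the functional inequality C(x) ≤ C(x₀)·(1 + L·d(x, x₀)) + L·d(x, x₀)·C(x)·C(x₀) for all x, x₀ ∈ K. Then C is bounded above, i.e. there exists S ≥ 0 such that C(x) ≤ S for all x ∈ K. -/

import Mathlib

/-- Key compactness argument: if `C : K → ℝ` is nonnegative on a compact metric space
and satisfies the functional inequality
`C x ≤ C x₀ * (1 + L * dist x x₀) + L * dist x x₀ * C x * C x₀`,
then `C` is bounded above. -/
theorem uniform_bound_of_functional_inequality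
    {K : Type*} [MetricSpace K] [CompactSpace K]
    (L : ℝ) (hL : 0 < L) (C : K → ℝ)
    (hC0 : ∀ x, 0 ≤ C x)
    (hC : ∀ x x₀ : K,
      C x ≤ C x₀ * (1 + L * dist x x₀) + L * dist x x₀ * C x * C x₀) :
    ∃ S : ℝ, 0 ≤ S ∧ ∀ x, C x ≤ S := by
  -- radius around x₀
  set ε : K → ℝ := fun x₀ => 1 / (2 * L * (C x₀ + 1)) with hε
  have hεpos : ∀ x₀, 0 < ε x₀ := by
    intro x₀
    have h1 : (0:ℝ) < C x₀ + 1 := by linarith [hC0 x₀]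
    positivity
  -- local bound on each ball
  have hloc : ∀ x₀ x : K, x ∈ Metric.ball x₀ (ε x₀) → C x ≤ 2 * (C x₀ + 1) := by
    intro x₀ x hx
    have hd : dist x x₀ < ε x₀ := Metric.mem_ball.mp hx
    have hd0 : 0 ≤ dist x x₀ := dist_nonneg
    have h1 : (0:ℝ) < C x₀ + 1 := by linarith [hC0 x₀]
    have hLd : L * dist x x₀ * (C x₀ + 1) ≤ 1 / 2 := by
      have : L * dist x x₀ ≤ L * ε x₀ := by nlinarith
      have h2 : L * ε x₀ * (C x₀ + 1) = 1 / 2 := by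
        simp only [hε]
        field_simp
      nlinarith
    have hkey := hC x x₀
    have hA : L * dist x x₀ * C x * C x₀ ≤ (1/2) * C x := by
      have : L * dist x x₀ * C x₀ ≤ 1 / 2 := by nlinarith [hC0 x₀]
      nlinarith [hC0 x]
    have hB : C x₀ * (1 + L * dist x x₀) ≤ C x₀ + 1/2 := by
      nlinarith [hC0 x₀]
    nlinarith [hC0 x]
  cases isEmpty_or_nonempty K with
  | inl h => exact ⟨0, le_refl 0, fun x => (h.elim x)⟩
  | inr h =>
    obtain ⟨t, ht⟩ := isCompact_univ.elim_finite_subcover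
      (fun x₀ : K => Metric.ball x₀ (ε x₀)) (fun x₀ => Metric.isOpen_ball)
      (fun x _ => Set.mem_iUnion.mpr ⟨x, Metric.mem_ball_self (hεpos x)⟩)
    have htne : t.Nonempty := by
      obtain ⟨x⟩ := h
      have := ht (Set.mem_univ x)
      simp only [Set.mem_iUnion] at this
      obtain ⟨i, hi, _⟩ := this
      exact ⟨i, hi⟩
    refine ⟨t.sup' htne (fun x₀ => 2 * (C x₀ + 1)), ?_, ?_⟩
    · obtain ⟨i, hi⟩ := id htne
      have : (2:ℝ) * (C i + 1) ≤ t.sup' htne (fun x₀ => 2 * (C x₀ + 1)) :=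
        Finset.le_sup' (fun x₀ => 2 * (C x₀ + 1)) hi
      nlinarith [hC0 i]
    · intro x
      have := ht (Set.mem_univ x)
      simp only [Set.mem_iUnion] at this
      obtain ⟨i, hi, hxi⟩ := this
      exact le_trans (hloc i x hxi) (Finset.le_sup' (fun x₀ => 2 * (C x₀ + 1)) hi)
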